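/- Under Assumption 1, the diagonal entries of the asymptotic covariance matrices satisfy Σ_HT^∞(z,z) − Σ_Haj^∞(z,z) = ((p_z^∞)^{-1} − 1)·lim_{K→∞}[S_HT²(z) − S_Haj²(z)]. In particular, for any fixed K: (i) S_HT²(z) − S_Haj²(z) = 0 if w_k = 1/K for all k; (ii) S_HT²(z) − S_Haj²(z) ≥ 0 if Ȳ_k(z) is constant over all k; (iii) S_HT²(z) − S_Haj²(z) ≤ 0 if K w_k Ȳ_k(z) is constant over all k. (Corollary 1) -/
import Mathlib


open Finset Filter MeasureTheory
open scoped BigOperators Topology Classical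

noncomputable section

/-- Expectation of `f` under the uniform distribution on the finite set `Ω`. -/
def fexp {α : Type*} (Ω : Finset α) (f : α → ℝ) : ℝ := (∑ ω ∈ Ω, f ω) / Ω.card

/-- Probability of the event `e` under the uniform distribution on `Ω`. -/
def fpr {α : Type*} (Ω : Finset α) (e : α → Prop) : ℝ :=
  ((Ω.filter e).card : ℝ) / Ω.card

/-- Covariance of `f` and `g` under the uniform distribution on `Ω`. -/
def fcov {α : Type*} (Ω : Finset α) (f g : α → ℝ) : ℝ :=
  fexp Ω (fun ω => (f ω - fexp Ω f) * (g ω - fexp Ω g))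

/-- Variance of `f` under the uniform distribution on `Ω`. -/
def fvar {α : Type*} (Ω : Finset α) (f : α → ℝ) : ℝ := fcov Ω f f

/-- Conditional expectation of `f` given the event `e`, under the uniform distribution on `Ω`. -/
def fcexp {α : Type*} (Ω : Finset α) (e : α → Prop) (f : α → ℝ) : ℝ :=
  (∑ ω ∈ Ω.filter e, f ω) / (Ω.filter e).card

/-- An incomplete block design on a finite population, with `T` treatments. -/
structure IBD (T : ℕ) where
  /-- number of blocks -/
  K : ℕ
  hK : 0 < K
  /-- number of treatments assigned to each block -/
  t : ℕ
  ht : 2 ≤ t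
  htT : t < T
  /-- number of units -/
  N : ℕ
  /-- block membership -/
  b : Fin N → Fin K
  /-- potential outcomes -/
  Y : Fin N → Fin T → ℝ
  /-- block weights -/
  w : Fin K → ℝ
  hw : ∑ k, w k = 1
  /-- multiplicity of each treatment subset in the design; the support is `𝒲` -/
  r : Finset (Fin T) → ℕ
  hrcard : ∀ ω, r ω ≠ 0 → ω.card = t
  hrK : ∑ ω : Finset (Fin T), r ω = K
  hdvd : ∀ k : Fin K, t ∣ (Finset.univ.filter (fun i => b i = k)).card
  hnpos : ∀ k : Fin K, 0 < (Finset.univ.filter (fun i => b i = k)).card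

namespace IBD

variable {T : ℕ} (D : IBD T)

/-- The units in block `k`. -/
def blk (k : Fin D.K) : Finset (Fin D.N) := Finset.univ.filter (fun i => D.b i = k)

/-- Block size `n_k`. -/
def n (k : Fin D.K) : ℕ := (D.blk k).card

/-- Block mean of potential outcomes, `Ȳ_k(z)`. -/
def Ybar (k : Fin D.K) (z : Fin T) : ℝ := (∑ i ∈ D.blk k, D.Y i z) / (D.n k : ℝ)

/-- Weighted average of potential outcomes, `Ȳ(z;w)`. -/
def Ybarw (z : Fin T) : ℝ := ∑ k, D.w k * D.Ybar k z

/-- Contrast estimand `τ_w(g)`. -/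
def tauw (g : Fin T → ℝ) : ℝ := ∑ z, g z * D.Ybarw z

/-- `L_z`: number of blocks whose treatment subset contains `z`. -/
def Lcount (z : Fin T) : ℕ :=
  ∑ ω ∈ Finset.univ.filter (fun ω : Finset (Fin T) => z ∈ ω), D.r ω

/-- `l_{z,z'}`: number of blocks whose treatment subset contains both `z` and `z'`. -/
def lcount (z z' : Fin T) : ℕ :=
  ∑ ω ∈ Finset.univ.filter (fun ω : Finset (Fin T) => z ∈ ω ∧ z' ∈ ω), D.r ω

/-- `p_z = L_z/K`. -/
def p (z : Fin T) : ℝ := (D.Lcount z : ℝ) / (D.K : ℝ)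

/-- `q_{z,z'} = l_{z,z'}/K`. -/
def q (z z' : Fin T) : ℝ := (D.lcount z z' : ℝ) / (D.K : ℝ)

/-- Within-block variance `S_k²(z)`. -/
def Sk2 (k : Fin D.K) (z : Fin T) : ℝ :=
  (∑ i ∈ D.blk k, (D.Y i z - D.Ybar k z) ^ 2) / ((D.n k : ℝ) - 1)

/-- Within-block treatment-effect heterogeneity `S_k²(τ(z,z'))`. -/
def Sk2tau (k : Fin D.K) (z z' : Fin T) : ℝ :=
  (∑ i ∈ D.blk k, (D.Y i z - D.Y i z' - (D.Ybar k z - D.Ybar k z')) ^ 2) / ((D.n k : ℝ) - 1)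

/-- Between-block variance `S_HT²(z)`. -/
def SHT2 (z : Fin T) : ℝ :=
  (∑ k, ((D.K : ℝ) * D.w k * D.Ybar k z - D.Ybarw z) ^ 2) / ((D.K : ℝ) - 1)

/-- Between-block heterogeneity `S_HT²(τ(z,z'))`. -/
def SHT2tau (z z' : Fin T) : ℝ :=
  (∑ k, ((D.K : ℝ) * D.w k * (D.Ybar k z - D.Ybar k z') - (D.Ybarw z - D.Ybarw z')) ^ 2) /
    ((D.K : ℝ) - 1)

/-- Between-block variance `S_Haj²(z)` for the Hájek estimator. -/
def SHaj2 (z : Fin T) : ℝ :=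
  (∑ k, ((D.K : ℝ) * D.w k) ^ 2 * (D.Ybar k z - D.Ybarw z) ^ 2) / ((D.K : ℝ) - 1)

/-- Between-block heterogeneity `S_Haj²(τ(z,z'))`. -/
def SHaj2tau (z z' : Fin T) : ℝ :=
  (∑ k, ((D.K : ℝ) * D.w k) ^ 2 *
    (D.Ybar k z - D.Ybar k z' - (D.Ybarw z - D.Ybarw z')) ^ 2) / ((D.K : ℝ) - 1)

/-- `S_HT²(τ_w(g))`. -/
def SHT2taug (g : Fin T → ℝ) : ℝ :=
  (∑ k, ((D.K : ℝ) * D.w k * (∑ z, g z * D.Ybar k z) - ∑ z, g z * D.Ybarw z) ^ 2) /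
    ((D.K : ℝ) - 1)

/-- `S_Haj²(τ_w(g))`. -/
def SHaj2taug (g : Fin T → ℝ) : ℝ :=
  (∑ k, ((D.K : ℝ) * D.w k * ((∑ z, g z * D.Ybar k z) - ∑ z, g z * D.Ybarw z)) ^ 2) /
    ((D.K : ℝ) - 1)

/-- `S_k²(τ_w(g))`. -/
def Sk2taug (k : Fin D.K) (g : Fin T → ℝ) : ℝ :=
  (∑ i ∈ D.blk k, ((D.K : ℝ) * D.w k * ((∑ z, g z * D.Y i z) - ∑ z, g z * D.Ybar k z)) ^ 2) /
    ((D.n k : ℝ) - 1)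

/-- Between-block covariance matrix `B_HT`. -/
def BHT (z z' : Fin T) : ℝ :=
  (1 / 2) * ((D.q z z' / (D.p z * D.p z') - 1) * (D.SHT2 z + D.SHT2 z' - D.SHT2tau z z'))

/-- Between-block covariance matrix `B_Haj`. -/
def BHaj (z z' : Fin T) : ℝ :=
  (1 / 2) * ((D.q z z' / (D.p z * D.p z') - 1) * (D.SHaj2 z + D.SHaj2 z' - D.SHaj2tau z z'))

/-- Within-block covariance matrix `W`. -/
def Wmat (z z' : Fin T) : ℝ :=
  if z = z' then
    (1 / D.p z) * ((1 / (D.K : ℝ)) * ∑ k, ((D.K : ℝ) * D.w k) ^ 2 *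
      (((D.t : ℝ) - 1) * D.Sk2 k z / (D.n k : ℝ)))
  else
    -(D.q z z' / (2 * D.p z * D.p z')) * ((1 / (D.K : ℝ)) * ∑ k, ((D.K : ℝ) * D.w k) ^ 2 *
      ((D.Sk2 k z + D.Sk2 k z' - D.Sk2tau k z z') / (D.n k : ℝ)))

/-- `Σ_HT = B_HT + W`. -/
def SigmaHT (z z' : Fin T) : ℝ := D.BHT z z' + D.Wmat z z'

/-- `Σ_Haj = B_Haj + W`. -/
def SigmaHaj (z z' : Fin T) : ℝ := D.BHaj z z' + D.Wmat z z'

/-- The type of a complete treatment assignment: stage 1 (subsets to blocks) and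
stage 2 (treatments to units). -/
abbrev Assign : Type := (Fin D.K → Finset (Fin T)) × (Fin D.N → Fin T)

/-- Validity of the stage-1 assignment: each subset `ω` is assigned to exactly `r_ω` blocks. -/
def ValidR (R : Fin D.K → Finset (Fin T)) : Prop :=
  ∀ ω : Finset (Fin T), (Finset.univ.filter (fun k => R k = ω)).card = D.r ω

/-- Validity of the stage-2 assignment: within block `k`, exactly `n_k/t` units receive
each treatment of `R k`. -/
def ValidZ (R : Fin D.K → Finset (Fin T)) (Z : Fin D.N → Fin T) : Prop :=
  (∀ i, Z i ∈ R (D.b i)) ∧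
  ∀ k : Fin D.K, ∀ z ∈ R k, ((D.blk k).filter (fun i => Z i = z)).card = D.n k / D.t

/-- The set of all valid assignments; the two-stage IBD randomization is the uniform
distribution on this set. -/
def Omega : Finset D.Assign :=
  Finset.univ.filter (fun a => D.ValidR a.1 ∧ D.ValidZ a.1 a.2)

/-- Observed block mean `Ŷ_k(z)` (zero if `z` is not assigned to block `k`). -/
def Yhatk (a : D.Assign) (k : Fin D.K) (z : Fin T) : ℝ :=
  if z ∈ a.1 k then
    (∑ i ∈ (D.blk k).filter (fun i => a.2 i = z), D.Y i z) / ((D.n k : ℝ) / (D.t : ℝ))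
  else 0

/-- Horvitz–Thompson estimator `Ŷ_HT(z)`. -/
def YhatHT (a : D.Assign) (z : Fin T) : ℝ := ∑ k, D.w k * D.Yhatk a k z / D.p z

/-- `1̂_HT(z)`, the Horvitz–Thompson estimator of the constant 1. -/
def onehatHT (a : D.Assign) (z : Fin T) : ℝ :=
  ∑ k, D.w k * (if z ∈ a.1 k then (1 : ℝ) else 0) / D.p z

/-- Hájek estimator `Ŷ_Haj(z)`. -/
def YhatHaj (a : D.Assign) (z : Fin T) : ℝ := D.YhatHT a z / D.onehatHT a z

/-- Horvitz–Thompson contrast estimator `τ̂_HT(g)`. -/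
def tauhatHT (a : D.Assign) (g : Fin T → ℝ) : ℝ := ∑ z, g z * D.YhatHT a z

/-- Hájek contrast estimator `τ̂_Haj(g)`. -/
def tauhatHaj (a : D.Assign) (g : Fin T → ℝ) : ℝ := ∑ z, g z * D.YhatHaj a z

end IBD
namespace IBD

variable {T : ℕ} (D : IBD T)

/-- Sample within-block variance `s_k²(z)` (zero if `z ∉ R_k`). -/
def sk2 (a : D.Assign) (k : Fin D.K) (z : Fin T) : ℝ :=
  if z ∈ a.1 k then
    (∑ i ∈ (D.blk k).filter (fun i => a.2 i = z), (D.Y i z - D.Yhatk a k z) ^ 2) /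
      ((D.n k : ℝ) / (D.t : ℝ) - 1)
  else 0

/-- Sample between-block variance `s_HT²(z)`. -/
def sHT2 (a : D.Assign) (z : Fin T) : ℝ :=
  (∑ k, if z ∈ a.1 k then ((D.K : ℝ) * D.w k * D.Yhatk a k z - D.YhatHT a z) ^ 2 else 0) /
    ((D.Lcount z : ℝ) - 1)

/-- `Ŷ_A(z)` for the pair `(z,z')`: weighted mean of treatment `z` over blocks assigned
both `z` and `z'`. -/
def YhatA (a : D.Assign) (z z' : Fin T) : ℝ :=
  (∑ k, if z ∈ a.1 k ∧ z' ∈ a.1 k then (D.K : ℝ) * D.w k * D.Yhatk a k z else 0) /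
    (D.lcount z z' : ℝ)

/-- Sample between-block heterogeneity `s_HT²(τ(z,z'))`. -/
def sHT2tau (a : D.Assign) (z z' : Fin T) : ℝ :=
  (∑ k, if z ∈ a.1 k ∧ z' ∈ a.1 k then
      ((D.K : ℝ) * D.w k * (D.Yhatk a k z - D.Yhatk a k z') -
        (D.YhatA a z z' - D.YhatA a z' z)) ^ 2
    else 0) / ((D.lcount z z' : ℝ) - 1)

/-- Sample between-block variance `s_Haj²(z)`. -/
def sHaj2 (a : D.Assign) (z : Fin T) : ℝ :=
  (∑ k, if z ∈ a.1 k then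
      ((D.K : ℝ) * D.w k) ^ 2 * (D.Yhatk a k z - D.YhatHaj a z) ^ 2
    else 0) / ((D.Lcount z : ℝ) - 1)

/-- `Ŷ_{A'}(z)` for the pair `(z,z')`. -/
def YhatA' (a : D.Assign) (z z' : Fin T) : ℝ :=
  (∑ k, if z ∈ a.1 k ∧ z' ∈ a.1 k then D.w k * D.Yhatk a k z else 0) /
    (∑ k, if z ∈ a.1 k ∧ z' ∈ a.1 k then D.w k else 0)

/-- Sample between-block heterogeneity `s_Haj²(τ(z,z'))`. -/
def sHaj2tau (a : D.Assign) (z z' : Fin T) : ℝ :=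
  (∑ k, if z ∈ a.1 k ∧ z' ∈ a.1 k then
      ((D.K : ℝ) * D.w k) ^ 2 * (D.Yhatk a k z - D.Yhatk a k z' -
        (D.YhatA' a z z' - D.YhatA' a z' z)) ^ 2
    else 0) / ((D.lcount z z' : ℝ) - 1)

/-- Between-block covariance estimator `Ŝ_HT^{bb}(z,z')`. -/
def ShatHTbb (a : D.Assign) (z z' : Fin T) : ℝ :=
  if 2 ≤ D.lcount z z' then
    ((D.lcount z z' : ℝ) / (2 * (D.Lcount z : ℝ) * (D.Lcount z' : ℝ))) *
      (D.sHT2 a z + D.sHT2 a z' - D.sHT2tau a z z')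
  else 0

/-- Between-block covariance estimator `Ŝ_Haj^{bb}(z,z')`. -/
def ShatHajbb (a : D.Assign) (z z' : Fin T) : ℝ :=
  if 2 ≤ D.lcount z z' then
    ((D.lcount z z' : ℝ) / (2 * (D.Lcount z : ℝ) * (D.Lcount z' : ℝ))) *
      (D.sHaj2 a z + D.sHaj2 a z' - D.sHaj2tau a z z')
  else 0

/-- Within-block covariance estimator `Ŝ_HT^{wb}(z,z')`. -/
def ShatHTwb (a : D.Assign) (z z' : Fin T) : ℝ :=
  (if 2 ≤ D.lcount z z' then
    (1 - (D.Lcount z : ℝ) * (D.Lcount z' : ℝ) / ((D.K : ℝ) * (D.lcount z z' : ℝ))) *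
      D.ShatHTbb a z z'
   else 0) +
  (if z = z' then
    (1 / D.p z) * ((1 / (D.K : ℝ) ^ 2) * ∑ k,
      if z ∈ a.1 k then ((D.K : ℝ) * D.w k) ^ 2 * D.sk2 a k z * (D.t : ℝ) / (D.n k : ℝ) else 0)
   else 0)

/-- Within-block covariance estimator `Ŝ_Haj^{wb}(z,z')`. -/
def ShatHajwb (a : D.Assign) (z z' : Fin T) : ℝ :=
  (if 2 ≤ D.lcount z z' then
    (1 - (D.Lcount z : ℝ) * (D.Lcount z' : ℝ) / ((D.K : ℝ) * (D.lcount z z' : ℝ))) *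
      D.ShatHajbb a z z'
   else 0) +
  (if z = z' then
    (1 / D.p z) * ((1 / (D.K : ℝ) ^ 2) * ∑ k,
      if z ∈ a.1 k then ((D.K : ℝ) * D.w k) ^ 2 * D.sk2 a k z * (D.t : ℝ) / (D.n k : ℝ) else 0)
   else 0)

/-- `μ(z) = Σ_k w_k 1[z∈R_k] Ȳ_k(z) / p_z`. -/
def muHT (a : D.Assign) (z : Fin T) : ℝ :=
  ∑ k, D.w k * (if z ∈ a.1 k then D.Ybar k z else 0) / D.p z

/-- `δ_k(z) = (w_k 1[z∈R_k]/p_z)(Ŷ_k(z) − Ȳ_k(z))`. -/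
def deltak (a : D.Assign) (k : Fin D.K) (z : Fin T) : ℝ :=
  D.w k * (if z ∈ a.1 k then (1 : ℝ) else 0) / D.p z * (D.Yhatk a k z - D.Ybar k z)

/-- `γ̄² = K⁻¹ Σ_k (K w_k)²`. -/
def gambar2 : ℝ := (1 / (D.K : ℝ)) * ∑ k, ((D.K : ℝ) * D.w k) ^ 2

/-- `K⁻¹ Σ_k (K w_k)² Ȳ_k(z)`. -/
def gamYbar (z : Fin T) : ℝ := (1 / (D.K : ℝ)) * ∑ k, ((D.K : ℝ) * D.w k) ^ 2 * D.Ybar k z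

end IBD
/-- Assumption 1 of the paper, for a sequence of designs indexed along `K → ∞`. -/
def Assumption1 {T : ℕ} (D : ℕ → IBD T) (t0 W0 : ℕ)
    (pinf : Fin T → ℝ) (qinf : Fin T → Fin T → ℝ) : Prop :=
  -- the number of blocks tends to infinity
  Tendsto (fun m => ((D m).K : ℝ)) atTop atTop ∧
  -- (i) T is fixed (by the type), t is fixed, and |𝒲| is fixed
  (∀ m, (D m).t = t0) ∧
  (∀ m, (Finset.univ.filter (fun ω : Finset (Fin T) => (D m).r ω ≠ 0)).card = W0) ∧
  -- (ii) K⁻¹ Σ (K w_k)² has a finite limit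
  (∃ C, Tendsto (fun m => (1 / ((D m).K : ℝ)) * ∑ k, (((D m).K : ℝ) * (D m).w k) ^ 2)
    atTop (𝓝 C)) ∧
  -- (iii) p_z → p∞_z ∈ (0,1), q_{z,z'} → q∞_{z,z'} ∈ [0,1)
  (∀ z, Tendsto (fun m => (D m).p z) atTop (𝓝 (pinf z)) ∧ 0 < pinf z ∧ pinf z < 1) ∧
  (∀ z z', Tendsto (fun m => (D m).q z z') atTop (𝓝 (qinf z z')) ∧
    0 ≤ qinf z z' ∧ qinf z z' < 1) ∧
  -- (iv) Ȳ_w and the between-block variances have finite limits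
  (∀ z, ∃ C, Tendsto (fun m => (D m).Ybarw z) atTop (𝓝 C)) ∧
  (∀ z, ∃ C, Tendsto (fun m => (D m).SHT2 z) atTop (𝓝 C)) ∧
  (∀ z z', ∃ C, Tendsto (fun m => (D m).SHT2tau z z') atTop (𝓝 C)) ∧
  (∀ z, ∃ C, Tendsto (fun m => (D m).SHaj2 z) atTop (𝓝 C)) ∧
  (∀ z z', ∃ C, Tendsto (fun m => (D m).SHaj2tau z z') atTop (𝓝 C)) ∧
  -- (v) weighted averages of within-block variances have finite limits
  (∀ z, ∃ C, Tendsto (fun m => (1 / ((D m).K : ℝ)) *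
    ∑ k, (((D m).K : ℝ) * (D m).w k) ^ 2 * (D m).Sk2 k z / ((D m).n k : ℝ))
      atTop (𝓝 C)) ∧
  (∀ z z', ∃ C, Tendsto (fun m => (1 / ((D m).K : ℝ)) *
    ∑ k, (((D m).K : ℝ) * (D m).w k) ^ 2 * (D m).Sk2tau k z z' / ((D m).n k : ℝ))
      atTop (𝓝 C)) ∧
  -- (vi) max_k K⁻¹ (K w_k Ȳ_k(z) − Ȳ(z;w))² → 0
  (∀ z, ∀ ε : ℝ, 0 < ε → ∃ M, ∀ m ≥ M, ∀ k : Fin (D m).K,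
    (1 / ((D m).K : ℝ)) * (((D m).K : ℝ) * (D m).w k * (D m).Ybar k z - (D m).Ybarw z) ^ 2
      < ε) ∧
  -- (vii) fourth-moment condition
  (∀ z, Tendsto (fun m => (((D m).K : ℝ)) ^ 2 *
    ∑ k, ((D m).w k) ^ 4 * (1 / ((D m).n k : ℝ)) * ∑ i ∈ (D m).blk k, (D m).Y i z ^ 4)
      atTop (𝓝 0))

/-- A sequence of random variables on the designs' assignment spaces converges
in probability to the (deterministic) sequence `c`. -/
def TendstoP {T : ℕ} (D : ℕ → IBD T) (X : ∀ m, (D m).Assign → ℝ) (c : ℕ → ℝ) : Prop :=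
  ∀ ε : ℝ, 0 < ε →
    Tendsto (fun m => fpr (D m).Omega (fun a => ε < |X m a - c m|)) atTop (𝓝 0)

/-- `ν` is the centered multivariate Gaussian distribution on `Fin T → ℝ` with covariance
matrix `S`: every linear functional of it is a centered real Gaussian with the induced
variance. -/
def IsGaussianVec {T : ℕ} (ν : Measure (Fin T → ℝ)) (S : Fin T → Fin T → ℝ) : Prop :=
  ∀ c : Fin T → ℝ,
    ν.map (fun x => ∑ z, c z * x z) =
      ProbabilityTheory.gaussianReal 0 (Real.toNNReal (∑ z, ∑ z', c z * S z z' * c z'))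

/-- A sequence of random vectors on the designs' assignment spaces converges in
distribution to the law `ν` (tested against bounded continuous functions). -/
def TendstoD {T : ℕ} (D : ℕ → IBD T) (X : ∀ m, (D m).Assign → (Fin T → ℝ))
    (ν : Measure (Fin T → ℝ)) : Prop :=
  ∀ f : BoundedContinuousFunction (Fin T → ℝ) ℝ,
    Tendsto (fun m => fexp (D m).Omega (fun a => f (X m a))) atTop (𝓝 (∫ x, f x ∂ν))

/-- A sequence of real random variables on the designs' assignment spaces converges in
distribution to the law `ν`. -/
def TendstoD1 {T : ℕ} (D : ℕ → IBD T) (X : ∀ m, (D m).Assign → ℝ) (ν : Measure ℝ) : Prop :=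
  ∀ f : BoundedContinuousFunction ℝ ℝ,
    Tendsto (fun m => fexp (D m).Omega (fun a => f (X m a))) atTop (𝓝 (∫ x, f x ∂ν))
namespace IBD

variable {T : ℕ} (D : IBD T)

/-- Block-level average `Ȳ(z) = K⁻¹ Σ_k Ȳ_k(z)`. -/
def Ybarb (z : Fin T) : ℝ := (∑ k, D.Ybar k z) / (D.K : ℝ)

/-- Between-block variance `S_bb²(z)` (equal block weights). -/
def Sbb2 (z : Fin T) : ℝ := (∑ k, (D.Ybar k z - D.Ybarb z) ^ 2) / ((D.K : ℝ) - 1)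

/-- Between-block heterogeneity `S_bb²(τ(z,z'))` (equal block weights). -/
def Sbb2tau (z z' : Fin T) : ℝ :=
  (∑ k, (D.Ybar k z - D.Ybar k z' - (D.Ybarb z - D.Ybarb z')) ^ 2) / ((D.K : ℝ) - 1)

/-- Adjusted observed block mean `Ŷ_k^{adj}(z)`. -/
def Yadjk (a : D.Assign) (k : Fin D.K) (z : Fin T) : ℝ :=
  if z ∈ a.1 k then
    D.Yhatk a k z - (1 / (D.t : ℝ)) * ∑ z' ∈ a.1 k, D.Yhatk a k z'
  else 0

/-- `Ŷ^{adj}(z) = Σ_k Ŷ_k^{adj}(z)`. -/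
def Yadj (a : D.Assign) (z : Fin T) : ℝ := ∑ k, D.Yadjk a k z

/-- The adjusted (block-effect corrected) estimator `τ̂^{BIBD-adj}(z₁,z₂)`. -/
def tauadj (a : D.Assign) (z1 z2 : Fin T) : ℝ :=
  ((D.t : ℝ) / ((D.lcount z1 z2 : ℝ) * (T : ℝ))) * (D.Yadj a z1 - D.Yadj a z2)

/-- `𝒲_{z̃}`: the treatment subsets of the design containing `z1` but not `z2`. -/
def Wsets (z1 z2 : Fin T) : Finset (Finset (Fin T)) :=
  Finset.univ.filter (fun ω : Finset (Fin T) => D.r ω ≠ 0 ∧ z1 ∈ ω ∧ z2 ∉ ω)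

/-- `S_k²(τ(z̃,ω))`. -/
def Sk2tauSet (k : Fin D.K) (zt : Fin T) (ω : Finset (Fin T)) : ℝ :=
  (∑ i ∈ D.blk k,
      (D.Y i zt - (1 / ((D.t : ℝ) - 1)) * (∑ z ∈ ω.erase zt, D.Y i z) -
        (D.Ybar k zt - (1 / ((D.t : ℝ) - 1)) * (∑ z ∈ ω.erase zt, D.Ybar k z))) ^ 2) /
    ((D.n k : ℝ) - 1)

/-- `S_bb²(τ(z̃,ω))`. -/
def Sbb2tauSet (zt : Fin T) (ω : Finset (Fin T)) : ℝ :=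
  (∑ k,
      (D.Ybar k zt - (1 / ((D.t : ℝ) - 1)) * (∑ z ∈ ω.erase zt, D.Ybar k z) -
        (D.Ybarb zt - (1 / ((D.t : ℝ) - 1)) * (∑ z ∈ ω.erase zt, D.Ybarb z))) ^ 2) /
    ((D.K : ℝ) - 1)

/-- `S̄_k²(𝒲_{z̃})`. -/
def SbarkW (k : Fin D.K) (z1 z2 : Fin T) : ℝ :=
  (1 / ((D.Wsets z1 z2).card : ℝ)) *
    ∑ ω ∈ D.Wsets z1 z2, ∑ z ∈ ω.erase z1, (1 / ((D.t : ℝ) - 1)) * D.Sk2 k z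

/-- `S̄_k²(τ(z̃,𝒲_{z̃}))`. -/
def SbarktauW (k : Fin D.K) (z1 z2 : Fin T) : ℝ :=
  (1 / ((D.Wsets z1 z2).card : ℝ)) * ∑ ω ∈ D.Wsets z1 z2, D.Sk2tauSet k z1 ω

/-- `S̄_bb²(τ(z̃,𝒲_{z̃}))`. -/
def SbarbbtauW (z1 z2 : Fin T) : ℝ :=
  (1 / ((D.Wsets z1 z2).card : ℝ)) * ∑ ω ∈ D.Wsets z1 z2, D.Sbb2tauSet z1 ω

/-- `V̄_k(z̃)`. -/
def Vbark (k : Fin D.K) (z1 z2 : Fin T) : ℝ :=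
  (D.t : ℝ) * D.Sk2 k z1 / (D.n k : ℝ) +
    (1 / ((D.t : ℝ) - 1)) * ((D.t : ℝ) * D.SbarkW k z1 z2 / (D.n k : ℝ)) -
    D.SbarktauW k z1 z2 / (D.n k : ℝ)

/-- `V_k(z₁,z₂)`. -/
def Vk (k : Fin D.K) (z1 z2 : Fin T) : ℝ :=
  (D.t : ℝ) * D.Sk2 k z1 / (D.n k : ℝ) + (D.t : ℝ) * D.Sk2 k z2 / (D.n k : ℝ) -
    D.Sk2tau k z1 z2 / (D.n k : ℝ)

/-- Conditional inclusion probability `p(z) = P(z∈R_k | z₁∈R_k, z₂∉R_k)`. -/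
def pcond (z1 z2 z : Fin T) : ℝ :=
  ((∑ ω ∈ Finset.univ.filter
      (fun ω : Finset (Fin T) => z1 ∈ ω ∧ z2 ∉ ω ∧ z ∈ ω), D.r ω : ℕ) : ℝ) /
    ((D.Lcount z1 : ℝ) - (D.lcount z1 z2 : ℝ))

/-- Conditional pairwise inclusion probability `p_{z̃}(z,z')`. -/
def pcond2 (z1 z2 z z' : Fin T) : ℝ :=
  ((∑ ω ∈ Finset.univ.filter
      (fun ω : Finset (Fin T) => z1 ∈ ω ∧ z2 ∉ ω ∧ z ∈ ω ∧ z' ∈ ω), D.r ω : ℕ) : ℝ) /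
    ((D.Lcount z1 : ℝ) - (D.lcount z1 z2 : ℝ))

/-- Unweighted `Ŷ_A(z)` for the pair `(z,z')` (equal block weights `1/K`). -/
def YhatAu (a : D.Assign) (z z' : Fin T) : ℝ :=
  (∑ k, if z ∈ a.1 k ∧ z' ∈ a.1 k then D.Yhatk a k z else 0) / (D.lcount z z' : ℝ)

/-- Sample between-block heterogeneity `s_bb²(τ(z,z'))` (equal block weights). -/
def sbb2tau (a : D.Assign) (z z' : Fin T) : ℝ :=
  (∑ k, if z ∈ a.1 k ∧ z' ∈ a.1 k then
      (D.Yhatk a k z - D.Yhatk a k z' - (D.YhatAu a z z' - D.YhatAu a z' z)) ^ 2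
    else 0) / ((D.lcount z z' : ℝ) - 1)

/-- `s̄_bb²(τ(z̃,𝒲_{z̃}))`. -/
def sbarbb (a : D.Assign) (z1 z2 : Fin T) : ℝ :=
  (∑ z ∈ ({z1, z2} : Finset (Fin T))ᶜ,
      (D.pcond z1 z2 z / ((D.t : ℝ) - 1)) * D.sbb2tau a z1 z) -
  (∑ z ∈ ({z1, z2} : Finset (Fin T))ᶜ, ∑ z' ∈ ({z1, z2} : Finset (Fin T))ᶜ,
      if z ≠ z' then (D.pcond2 z1 z2 z z' / (2 * ((D.t : ℝ) - 1) ^ 2)) * D.sbb2tau a z z'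
      else 0)

/-- `σ̃²_bb(z₁,z₂)`. -/
def sigtilde (a : D.Assign) (z1 z2 : Fin T) : ℝ :=
  (1 / (D.K : ℝ)) * (D.sbb2tau a z1 z2 + ((T : ℝ) - 1) * (((D.t : ℝ) - 1) / (D.t : ℝ)) *
    (D.sbarbb a z1 z2 + D.sbarbb a z2 z1))

/-- Variance estimator `σ̂²_{adj-wb}(z₁,z₂)`. -/
def sigadjwb (a : D.Assign) (z1 z2 : Fin T) : ℝ :=
  (((T : ℝ) - (D.t : ℝ)) / ((T : ℝ) * ((D.t : ℝ) - 1))) * D.sigtilde a z1 z2 +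
    (1 / (D.K : ℝ) ^ 2) * ∑ k, (D.sk2 a k z1 + D.sk2 a k z2) * (T : ℝ) / (D.n k : ℝ)

/-- Variance estimator `σ̂²_{adj-bb}(z₁,z₂)`. -/
def sigadjbb (a : D.Assign) (z1 z2 : Fin T) : ℝ :=
  (((T : ℝ) - (D.t : ℝ)) / ((T : ℝ) * ((D.t : ℝ) - 1))) * D.sigtilde a z1 z2 +
    D.sbb2tau a z1 z2 / (D.K : ℝ)

end IBD
section RandomBlocking

/-- All ways to partition the `N` units into `K` blocks of prescribed sizes `nsz`. -/
def PartOmega (K N : ℕ) (nsz : Fin K → ℕ) : Finset (Fin N → Fin K) :=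
  Finset.univ.filter (fun B => ∀ k, (Finset.univ.filter (fun i => B i = k)).card = nsz k)

/-- Block mean under the blocking `B`. -/
def rbYbar {K N : ℕ} (nsz : Fin K → ℕ) (B : Fin N → Fin K) (Y : Fin N → ℝ) (k : Fin K) : ℝ :=
  (∑ i ∈ Finset.univ.filter (fun i => B i = k), Y i) / (nsz k : ℝ)

/-- Within-block variance `S_k²` under the blocking `B`. -/
def rbSk2 {K N : ℕ} (nsz : Fin K → ℕ) (B : Fin N → Fin K) (Y : Fin N → ℝ) (k : Fin K) : ℝ :=
  (∑ i ∈ Finset.univ.filter (fun i => B i = k), (Y i - rbYbar nsz B Y k) ^ 2) /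
    ((nsz k : ℝ) - 1)

/-- Block-level average `Ỹ` under the blocking `B`. -/
def rbYtilde {K N : ℕ} (nsz : Fin K → ℕ) (B : Fin N → Fin K) (Y : Fin N → ℝ) : ℝ :=
  (∑ k, rbYbar nsz B Y k) / (K : ℝ)

/-- Between-block variance `S_bb²` under the blocking `B`. -/
def rbSbb2 {K N : ℕ} (nsz : Fin K → ℕ) (B : Fin N → Fin K) (Y : Fin N → ℝ) : ℝ :=
  (∑ k, (rbYbar nsz B Y k - rbYtilde nsz B Y) ^ 2) / ((K : ℝ) - 1)

/-- Population variance `S²`. -/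
def popVar (N : ℕ) (Y : Fin N → ℝ) : ℝ :=
  (∑ i, (Y i - (∑ j, Y j) / (N : ℝ)) ^ 2) / ((N : ℝ) - 1)

end RandomBlocking

section AuxCor1

variable {T : ℕ}

lemma aux_SHT2tau_diag (D : IBD T) (z : Fin T) : D.SHT2tau z z = 0 := by
  unfold IBD.SHT2tau; simp

lemma aux_SHaj2tau_diag (D : IBD T) (z : Fin T) : D.SHaj2tau z z = 0 := by
  unfold IBD.SHaj2tau; simp

lemma aux_q_diag (D : IBD T) (z : Fin T) : D.q z z = D.p z := by
  unfold IBD.q IBD.p IBD.lcount IBD.Lcount; simp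

lemma aux_p_pos (D : IBD T) (z : Fin T) (hL : 0 < D.Lcount z) : 0 < D.p z := by
  unfold IBD.p
  exact div_pos (by exact_mod_cast hL) (by exact_mod_cast D.hK)

lemma aux_diag_diff (D : IBD T) (z : Fin T) (hL : 0 < D.Lcount z) :
    D.SigmaHT z z - D.SigmaHaj z z = (1 / D.p z - 1) * (D.SHT2 z - D.SHaj2 z) := by
  have hp : D.p z ≠ 0 := (aux_p_pos D z hL).ne'
  unfold IBD.SigmaHT IBD.SigmaHaj IBD.BHT IBD.BHaj
  rw [aux_SHT2tau_diag, aux_SHaj2tau_diag, aux_q_diag]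
  field_simp
  ring

end AuxCor1

/-- **Corollary 1.** Comparison of the asymptotic variances of the Horvitz–Thompson and
Hájek estimators: the difference of the diagonal entries of the limit covariance matrices
is `((p_z^∞)⁻¹ − 1)·lim(S_HT²(z) − S_Haj²(z))`; moreover, for any fixed design,
(i) the difference `S_HT²(z) − S_Haj²(z)` is zero when `w_k = 1/K`, (ii) nonnegative
when the block means are constant, and (iii) nonpositive when `K w_k Ȳ_k(z)` is
constant. -/
theorem ibd_ht_vs_hajek_asymptotic_variance
    {T : ℕ} (t0 W0 : ℕ) (pinf : Fin T → ℝ) (qinf : Fin T → Fin T → ℝ)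
    (D : ℕ → IBD T) (hA : Assumption1 D t0 W0 pinf qinf)
    (hL : ∀ m z, 0 < (D m).Lcount z)
    (z : Fin T) (SigHTinf SigHajinf : Fin T → Fin T → ℝ)
    (hSigHT : ∀ z z', Tendsto (fun m => (D m).SigmaHT z z') atTop (𝓝 (SigHTinf z z')))
    (hSigHaj : ∀ z z', Tendsto (fun m => (D m).SigmaHaj z z') atTop (𝓝 (SigHajinf z z')))
    (A B : ℝ)
    (hSHT : Tendsto (fun m => (D m).SHT2 z) atTop (𝓝 A))
    (hSHaj : Tendsto (fun m => (D m).SHaj2 z) atTop (𝓝 B)) :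
    SigHTinf z z - SigHajinf z z = (1 / pinf z - 1) * (A - B) ∧
    (∀ (D0 : IBD T) (z0 : Fin T),
      ((∀ k, D0.w k = 1 / (D0.K : ℝ)) → D0.SHT2 z0 - D0.SHaj2 z0 = 0) ∧
      ((∃ c, ∀ k, D0.Ybar k z0 = c) → 0 ≤ D0.SHT2 z0 - D0.SHaj2 z0) ∧
      ((∃ c, ∀ k, (D0.K : ℝ) * D0.w k * D0.Ybar k z0 = c) →
        D0.SHT2 z0 - D0.SHaj2 z0 ≤ 0)) := by
  constructor
  · obtain ⟨hpt, hppos, -⟩ := hA.2.2.2.2.1 z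
    have h1 : Tendsto (fun m => (D m).SigmaHT z z - (D m).SigmaHaj z z) atTop
        (𝓝 (SigHTinf z z - SigHajinf z z)) := (hSigHT z z).sub (hSigHaj z z)
    have h2 : Tendsto (fun m => (1 / (D m).p z - 1) * ((D m).SHT2 z - (D m).SHaj2 z)) atTop
        (𝓝 ((1 / pinf z - 1) * (A - B))) :=
      ((tendsto_const_nhds.div hpt hppos.ne').sub tendsto_const_nhds).mul (hSHT.sub hSHaj)
    have heq : (fun m => (D m).SigmaHT z z - (D m).SigmaHaj z z) =
        fun m => (1 / (D m).p z - 1) * ((D m).SHT2 z - (D m).SHaj2 z) := by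
      funext m; exact aux_diag_diff (D m) z (hL m z)
    rw [heq] at h1
    exact tendsto_nhds_unique h1 h2
  · intro D0 z0
    have hK : ((D0.K : ℝ)) ≠ 0 := by
      exact_mod_cast D0.hK.ne'
    have hK1 : (1 : ℝ) ≤ (D0.K : ℝ) := by exact_mod_cast D0.hK
    refine ⟨?_, ?_, ?_⟩
    · intro hw
      have hterm : ∀ k, ((D0.K : ℝ) * D0.w k * D0.Ybar k z0 - D0.Ybarw z0) ^ 2 =
          ((D0.K : ℝ) * D0.w k) ^ 2 * (D0.Ybar k z0 - D0.Ybarw z0) ^ 2 := by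
        intro k
        rw [hw k]
        field_simp
      unfold IBD.SHT2 IBD.SHaj2
      rw [sub_eq_zero]
      congr 1
      exact Finset.sum_congr rfl fun k _ => hterm k
    · rintro ⟨c, hc⟩
      have hYw : D0.Ybarw z0 = c := by
        unfold IBD.Ybarw
        simp only [hc, ← Finset.sum_mul, D0.hw, one_mul]
      have hHaj : D0.SHaj2 z0 = 0 := by
        unfold IBD.SHaj2
        simp [hc, hYw]
      rw [hHaj, sub_zero]
      unfold IBD.SHT2
      exact div_nonneg (Finset.sum_nonneg fun k _ => sq_nonneg _) (by linarith)
    · rintro ⟨c, hc⟩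
      have hYw : D0.Ybarw z0 = c := by
        unfold IBD.Ybarw
        have hterm : ∀ k, D0.w k * D0.Ybar k z0 = c / (D0.K : ℝ) := by
          intro k
          rw [eq_div_iff hK]
          linear_combination hc k
        rw [Finset.sum_congr rfl fun k _ => hterm k]
        simp [Finset.sum_const]
        field_simp
      have hHT : D0.SHT2 z0 = 0 := by
        unfold IBD.SHT2
        simp [hc, hYw]
      rw [hHT, zero_sub, neg_nonpos]
      unfold IBD.SHaj2
      exact div_nonneg (Finset.sum_nonneg fun k _ => mul_nonneg (sq_nonneg _) (sq_nonneg _))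
        (by linarith)
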